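/- Let n ≥ 2, m ≥ 1, let K ⊆ {0,…,m−1} with |K| ≤ m−1, let b : K → {0,…,n−1}, and let H = {i ∈ {0,…,n−1}^m : i_k = b(k) for all k ∈ K} be the corresponding direct-product subset, with the coordinates of P_H(v) identified with {0,…,n−1}^{m−|K|} via the positions outside K. Then P_H(C_n(r,m)) = C_n(r, m−|K|) whenever r ≤ m−|K|, and P_H(D_n(r,m)) = D_n(r−|K|, m−|K|) whenever r ≥ |K|. -/

import Mathlib

open Finset

/-- The `l`-th subvector in the concatenation decomposition:
`(subvec v l) i' = v (i'|l)`. -/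
def subvec {n m : ℕ} (v : (Fin (m + 1) → Fin n) → ZMod 2) (l : Fin n) :
    (Fin m → Fin n) → ZMod 2 :=
  fun i' => v (Fin.snoc i' l)

/-- The Berman code `D_n(r,m)`, defined recursively. -/
def BermanD (n : ℕ) : (m : ℕ) → ℕ → Set ((Fin m → Fin n) → ZMod 2)
  | 0, _ => {0}
  | m + 1, r =>
    if r = 0 then {v | ∑ i, v i = 0}
    else if m + 1 ≤ r then {0}
    else {v | (∀ l : Fin n, subvec v l ∈ BermanD n m (r - 1)) ∧
              (fun i' => ∑ l : Fin n, subvec v l i') ∈ BermanD n m r}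

/-- The dual Berman code `C_n(r,m)`, defined recursively. -/
def BermanC (n : ℕ) : (m : ℕ) → ℕ → Set ((Fin m → Fin n) → ZMod 2)
  | 0, _ => Set.univ
  | m + 1, r =>
    if r = 0 then {v | ∃ c : ZMod 2, ∀ i, v i = c}
    else if m + 1 ≤ r then Set.univ
    else {v | ∃ (u : (Fin m → Fin n) → ZMod 2) (w : Fin n → (Fin m → Fin n) → ZMod 2),
            u ∈ BermanC n m r ∧
            (∀ l : Fin n, (l : ℕ) < n - 1 → w l ∈ BermanC n m (r - 1)) ∧
            (∀ l : Fin n, (l : ℕ) = n - 1 → w l = 0) ∧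
            (∀ l : Fin n, subvec v l = u + w l)}

/-- Hamming weight of a binary vector. -/
def hwt {n m : ℕ} (v : (Fin m → Fin n) → ZMod 2) : ℕ :=
  (Finset.univ.filter fun i => v i ≠ 0).card

/-- `preceq j i` means `j ⪯ i`: for every position `k`, either `j k = 0` or `j k = i k`. -/
def preceq {n m : ℕ} (j i : Fin m → Fin n) : Prop :=
  ∀ k, (j k : ℕ) = 0 ∨ j k = i k

instance {n m : ℕ} (j i : Fin m → Fin n) : Decidable (preceq j i) :=
  inferInstanceAs (Decidable (∀ k, (j k : ℕ) = 0 ∨ j k = i k))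

/-- Hamming weight of an index tuple. -/
def wtTuple {n m : ℕ} (i : Fin m → Fin n) : ℕ :=
  (Finset.univ.filter fun k => (i k : ℕ) ≠ 0).card

/-- The vector `c_m(i')`: the indicator of `{i : i ⪯ i'}`. -/
def cVec {n : ℕ} (m : ℕ) (i' : Fin m → Fin n) : (Fin m → Fin n) → ZMod 2 :=
  fun i => if preceq i i' then 1 else 0

/-- The vector `d_m(i')`: the indicator of `{i : i' ⪯ i}`. -/
def dVec {n : ℕ} (m : ℕ) (i' : Fin m → Fin n) : (Fin m → Fin n) → ZMod 2 :=
  fun i => if preceq i' i then 1 else 0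

/-- The matrix `A_m = A_1^{⊗m}`: its entry in row `i` and column `j` is `1` iff `j ⪯ i`. -/
def Amat (n m : ℕ) : Matrix (Fin m → Fin n) (Fin m → Fin n) (ZMod 2) :=
  fun i j => if preceq j i then 1 else 0

/- ## basic helpers -/

theorem subvec_add {n m : ℕ} (v w : (Fin (m + 1) → Fin n) → ZMod 2) (l : Fin n) :
    subvec (v + w) l = subvec v l + subvec w l := rfl

theorem subvec_zero {n m : ℕ} (l : Fin n) :
    subvec (0 : (Fin (m + 1) → Fin n) → ZMod 2) l = 0 := rfl

theorem eq_of_subvec {n m : ℕ} {v w : (Fin (m + 1) → Fin n) → ZMod 2}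
    (h : ∀ l, subvec v l = subvec w l) : v = w := by
  funext i
  have hi : i = Fin.snoc (Fin.init i) (i (Fin.last m)) := (Fin.snoc_init_self i).symm
  rw [hi]
  exact congrFun (h (i (Fin.last m))) (Fin.init i)

theorem sum_snoc {m n : ℕ} (v : (Fin (m+1) → Fin n) → ZMod 2) :
    ∑ i, v i = ∑ l : Fin n, ∑ i' : Fin m → Fin n, v (Fin.snoc i' l) := by
  calc ∑ i, v i = ∑ p : Fin n × (Fin m → Fin n), v (Fin.snoc p.2 p.1) :=
        (Fintype.sum_bijective (fun p : Fin n × (Fin m → Fin n) => Fin.snoc (α := fun _ => Fin n) p.2 p.1)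
          ⟨fun p q h => by
            have h1 : p.1 = q.1 := by
              have := congrArg (fun f => f (Fin.last m)) h; simpa using this
            have h2 : p.2 = q.2 := by
              have := congrArg Fin.init h; simpa [Fin.init_snoc] using this
            exact Prod.ext h1 h2,
           fun i => ⟨(i (Fin.last m), Fin.init i), Fin.snoc_init_self i⟩⟩ _ _ (fun p => rfl)).symm
    _ = ∑ l : Fin n, ∑ i' : Fin m → Fin n, v (Fin.snoc i' l) := Fintype.sum_prod_type _

/- ## unfolding lemmas -/

theorem bermanD_zero (n m : ℕ) :
    BermanD n (m+1) 0 = {v | ∑ i, v i = 0} := by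
  simp [BermanD]

theorem bermanD_top (n m r : ℕ) (h : m + 1 ≤ r) :
    BermanD n (m+1) r = {0} := by
  simp only [BermanD]; rw [if_neg (by omega), if_pos h]

theorem bermanD_succ (n m r : ℕ) (h1 : r ≠ 0) (h2 : r ≤ m) :
    BermanD n (m+1) r = {v | (∀ l : Fin n, subvec v l ∈ BermanD n m (r - 1)) ∧
        (fun i' => ∑ l : Fin n, subvec v l i') ∈ BermanD n m r} := by
  simp only [BermanD]; rw [if_neg h1, if_neg (by omega)]

theorem bermanC_zero (n m : ℕ) :
    BermanC n (m+1) 0 = {v | ∃ c : ZMod 2, ∀ i, v i = c} := by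
  simp [BermanC]

theorem bermanC_top (n m r : ℕ) (h : m + 1 ≤ r) :
    BermanC n (m+1) r = Set.univ := by
  simp only [BermanC]; rw [if_neg (by omega), if_pos h]

theorem bermanC_succ (n m r : ℕ) (h1 : r ≠ 0) (h2 : r ≤ m) :
    BermanC n (m+1) r = {v | ∃ (u : (Fin m → Fin n) → ZMod 2)
            (w : Fin n → (Fin m → Fin n) → ZMod 2),
            u ∈ BermanC n m r ∧
            (∀ l : Fin n, (l : ℕ) < n - 1 → w l ∈ BermanC n m (r - 1)) ∧
            (∀ l : Fin n, (l : ℕ) = n - 1 → w l = 0) ∧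
            (∀ l : Fin n, subvec v l = u + w l)} := by
  simp only [BermanC]; rw [if_neg h1, if_neg (by omega)]

theorem bermanC_univ (n m r : ℕ) (h : m ≤ r) : BermanC n m r = Set.univ := by
  cases m with
  | zero => rfl
  | succ M => exact bermanC_top n M r h

/- ## algebraic properties -/

theorem zero_mem_D (n : ℕ) : ∀ m r, (0 : (Fin m → Fin n) → ZMod 2) ∈ BermanD n m r := by
  intro m
  induction m with
  | zero => intro r; rfl
  | succ M IH =>
    intro r
    rcases Nat.eq_zero_or_pos r with h0 | h0
    · subst h0; rw [bermanD_zero]; simp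
    rcases le_or_gt (M+1) r with h1 | h1
    · rw [bermanD_top n M r h1]; rfl
    · rw [bermanD_succ n M r (by omega) (by omega)]
      refine ⟨fun l => by rw [subvec_zero]; exact IH _, ?_⟩
      have : (fun i' => ∑ l : Fin n, subvec (0 : (Fin (M+1) → Fin n) → ZMod 2) l i')
          = (0 : (Fin M → Fin n) → ZMod 2) := by
        funext i'; simp [subvec_zero]
      rw [this]; exact IH _

theorem add_mem_D (n : ℕ) : ∀ m r (v w : (Fin m → Fin n) → ZMod 2),
    v ∈ BermanD n m r → w ∈ BermanD n m r → v + w ∈ BermanD n m r := by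
  intro m
  induction m with
  | zero =>
    intro r v w hv hw
    simp only [BermanD, Set.mem_singleton_iff] at *
    rw [hv, hw]; simp
  | succ M IH =>
    intro r v w hv hw
    rcases Nat.eq_zero_or_pos r with h0 | h0
    · subst h0; rw [bermanD_zero] at *
      simp only [Set.mem_setOf_eq] at *
      simp [Finset.sum_add_distrib, hv, hw]
    rcases le_or_gt (M+1) r with h1 | h1
    · rw [bermanD_top n M r h1] at *
      simp only [Set.mem_singleton_iff] at *
      rw [hv, hw]; simp
    · rw [bermanD_succ n M r (by omega) (by omega)] at *
      obtain ⟨hv1, hv2⟩ := hv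
      obtain ⟨hw1, hw2⟩ := hw
      refine ⟨fun l => by rw [subvec_add]; exact IH _ _ _ (hv1 l) (hw1 l), ?_⟩
      have : (fun i' => ∑ l : Fin n, subvec (v + w) l i')
          = (fun i' => ∑ l : Fin n, subvec v l i') + (fun i' => ∑ l : Fin n, subvec w l i') := by
        funext i'; simp [subvec_add, Finset.sum_add_distrib]
      rw [this]; exact IH _ _ _ hv2 hw2

theorem sum_eq_zero_of_mem_D (n : ℕ) : ∀ m r (v : (Fin m → Fin n) → ZMod 2),
    v ∈ BermanD n m r → ∑ i, v i = 0 := by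
  intro m
  induction m with
  | zero =>
    intro r v hv
    simp only [BermanD, Set.mem_singleton_iff] at hv
    rw [hv]; simp
  | succ M IH =>
    intro r v hv
    rcases Nat.eq_zero_or_pos r with h0 | h0
    · subst h0; rw [bermanD_zero] at hv; exact hv
    rcases le_or_gt (M+1) r with h1 | h1
    · rw [bermanD_top n M r h1] at hv
      simp only [Set.mem_singleton_iff] at hv
      rw [hv]; simp
    · rw [bermanD_succ n M r (by omega) (by omega)] at hv
      rw [sum_snoc]
      have : ∀ l : Fin n, ∑ i' : Fin M → Fin n, v (Fin.snoc i' l) = 0 :=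
        fun l => IH _ _ (hv.1 l)
      simp [this]

theorem D_anti (n : ℕ) : ∀ m r r', r ≤ r' → BermanD n m r' ⊆ BermanD n m r := by
  intro m
  induction m with
  | zero => intro r r' _; simp [BermanD]
  | succ M IH =>
    intro r r' hrr v hv
    rcases Nat.eq_zero_or_pos r with h0 | h0
    · subst h0; rw [bermanD_zero]
      exact sum_eq_zero_of_mem_D n _ _ _ hv
    rcases le_or_gt (M+1) r with h1 | h1
    · rw [bermanD_top n M r' (by omega)] at hv
      rw [bermanD_top n M r h1]
      exact hv
    rcases le_or_gt (M+1) r' with h2 | h2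
    · rw [bermanD_top n M r' h2] at hv
      simp only [Set.mem_singleton_iff] at hv
      rw [hv]; exact zero_mem_D n _ _
    · rw [bermanD_succ n M r' (by omega) (by omega)] at hv
      rw [bermanD_succ n M r (by omega) (by omega)]
      exact ⟨fun l => IH _ _ (by omega) (hv.1 l), IH _ _ hrr hv.2⟩

theorem const_mem_C (n : ℕ) : ∀ m r (c : ZMod 2),
    (fun _ => c : (Fin m → Fin n) → ZMod 2) ∈ BermanC n m r := by
  intro m
  induction m with
  | zero => intro r c; trivial
  | succ M IH =>
    intro r c
    rcases Nat.eq_zero_or_pos r with h0 | h0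
    · subst h0; rw [bermanC_zero]; exact ⟨c, fun _ => rfl⟩
    rcases le_or_gt (M+1) r with h1 | h1
    · rw [bermanC_top n M r h1]; trivial
    · rw [bermanC_succ n M r (by omega) (by omega)]
      refine ⟨(fun _ => c), fun _ _ => 0, IH _ c, fun l _ => IH _ 0, fun l _ => rfl,
        fun l => by funext i'; simp [subvec]⟩

theorem zero_mem_C (n : ℕ) (m r : ℕ) : (0 : (Fin m → Fin n) → ZMod 2) ∈ BermanC n m r := by
  have := const_mem_C n m r 0
  convert this using 1
  rfl

theorem add_mem_C (n : ℕ) : ∀ m r (v w : (Fin m → Fin n) → ZMod 2),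
    v ∈ BermanC n m r → w ∈ BermanC n m r → v + w ∈ BermanC n m r := by
  intro m
  induction m with
  | zero => intro r v w _ _; trivial
  | succ M IH =>
    intro r v w hv hw
    rcases Nat.eq_zero_or_pos r with h0 | h0
    · subst h0; rw [bermanC_zero] at *
      obtain ⟨c, hc⟩ := hv
      obtain ⟨d, hd⟩ := hw
      exact ⟨c + d, fun i => by simp [hc, hd]⟩
    rcases le_or_gt (M+1) r with h1 | h1
    · rw [bermanC_top n M r h1]; trivial
    · rw [bermanC_succ n M r (by omega) (by omega)] at *
      obtain ⟨u1, w1, hu1, hw1, hz1, hs1⟩ := hv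
      obtain ⟨u2, w2, hu2, hw2, hz2, hs2⟩ := hw
      refine ⟨u1 + u2, w1 + w2, IH _ _ _ hu1 hu2,
        fun l hl => IH _ _ _ (hw1 l hl) (hw2 l hl),
        fun l hl => by simp only [Pi.add_apply, hz1 l hl, hz2 l hl, add_zero],
        fun l => by rw [subvec_add, hs1 l, hs2 l]; simp only [Pi.add_apply]; funext i; simp [Pi.add_apply]; ring⟩

theorem C_mono (n : ℕ) : ∀ m r r', r ≤ r' → BermanC n m r ⊆ BermanC n m r' := by
  intro m
  induction m with
  | zero => intro r r' _; simp [BermanC]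
  | succ M IH =>
    intro r r' hrr v hv
    rcases le_or_gt (M+1) r' with h2 | h2
    · rw [bermanC_top n M r' h2]; trivial
    rcases Nat.eq_zero_or_pos r' with h0' | h0'
    · subst h0'; interval_cases r; exact hv
    rcases Nat.eq_zero_or_pos r with h0 | h0
    · subst h0; rw [bermanC_zero] at hv
      obtain ⟨c, hc⟩ := hv
      have : v = (fun _ => c) := funext hc
      rw [this]; exact const_mem_C n _ _ c
    · rw [bermanC_succ n M r (by omega) (by omega)] at hv
      rw [bermanC_succ n M r' (by omega) (by omega)]
      obtain ⟨u, w, hu, hw, hz, hs⟩ := hv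
      exact ⟨u, w, IH _ _ hrr hu, fun l hl => IH _ _ (by omega) (hw l hl), hz, hs⟩

/- ## puncturing machinery -/

def GoodG {n m m' : ℕ} (g : Fin m → Fin m' ⊕ Fin n) : Prop :=
  (∀ k₁ k₂ k₁' k₂', g k₁ = Sum.inl k₁' → g k₂ = Sum.inl k₂' → (k₁ < k₂ ↔ k₁' < k₂')) ∧
  (∀ k', ∃ k, g k = Sum.inl k')

def sigmaG {n m m' : ℕ} (g : Fin m → Fin m' ⊕ Fin n) (j : Fin m' → Fin n) : Fin m → Fin n :=
  fun k => Sum.elim j id (g k)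

def punct {n m m' : ℕ} (g : Fin m → Fin m' ⊕ Fin n) (v : (Fin m → Fin n) → ZMod 2) :
    (Fin m' → Fin n) → ZMod 2 :=
  fun j => v (sigmaG g j)

theorem punct_add {n m m' : ℕ} (g : Fin m → Fin m' ⊕ Fin n) (v w : (Fin m → Fin n) → ZMod 2) :
    punct g (v + w) = punct g v + punct g w := rfl

theorem punct_zero {n m m' : ℕ} (g : Fin m → Fin m' ⊕ Fin n) :
    punct g (0 : (Fin m → Fin n) → ZMod 2) = 0 := rfl

theorem goodG_inl_inj {n m m' : ℕ} {g : Fin m → Fin m' ⊕ Fin n} (hg : GoodG g)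
    {k₁ k₂ : Fin m} {k' : Fin m'} (h1 : g k₁ = Sum.inl k') (h2 : g k₂ = Sum.inl k') :
    k₁ = k₂ := by
  by_contra hne
  rcases lt_or_gt_of_ne hne with h | h
  · exact absurd ((hg.1 _ _ _ _ h1 h2).mp h) (lt_irrefl _)
  · exact absurd ((hg.1 _ _ _ _ h2 h1).mp h) (lt_irrefl _)

/-- A choice of position for each cube coordinate. -/
noncomputable def posG {n m m' : ℕ} (g : Fin m → Fin m' ⊕ Fin n) (hg : GoodG g)
    (k' : Fin m') : Fin m := (hg.2 k').choose

theorem posG_spec {n m m' : ℕ} (g : Fin m → Fin m' ⊕ Fin n) (hg : GoodG g) (k' : Fin m') :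
    g (posG g hg k') = Sum.inl k' := (hg.2 k').choose_spec

theorem goodG_le {n m m' : ℕ} {g : Fin m → Fin m' ⊕ Fin n} (hg : GoodG g) : m' ≤ m := by
  have hinj : Function.Injective (posG g hg) := by
    intro a b hab
    have ha := posG_spec g hg a
    have hb := posG_spec g hg b
    rw [hab, hb] at ha
    exact (Sum.inl.inj ha).symm
  simpa using Fintype.card_le_of_injective _ hinj

theorem sigmaG_posG {n m m' : ℕ} (g : Fin m → Fin m' ⊕ Fin n) (hg : GoodG g)
    (j : Fin m' → Fin n) (k' : Fin m') : sigmaG g j (posG g hg k') = j k' := by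
  simp [sigmaG, posG_spec g hg k']

theorem punct_surjective {n m m' : ℕ} (g : Fin m → Fin m' ⊕ Fin n) (hg : GoodG g) :
    Function.Surjective (punct g (n := n)) := by
  intro t
  refine ⟨fun i => t (fun k' => i (posG g hg k')), ?_⟩
  funext j
  show t (fun k' => sigmaG g j (posG g hg k')) = t j
  congr 1
  funext k'
  exact sigmaG_posG g hg j k'

/- ### case A : last coordinate fixed -/

theorem goodG_restrictA {n M m' : ℕ} {g : Fin (M+1) → Fin m' ⊕ Fin n} (hg : GoodG g)
    {c : Fin n} (hA : g (Fin.last M) = Sum.inr c) : GoodG (g ∘ Fin.castSucc) := by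
  constructor
  · intro k₁ k₂ k₁' k₂' h1 h2
    have := hg.1 _ _ _ _ h1 h2
    simpa [Fin.castSucc_lt_castSucc_iff] using this
  · intro k'
    obtain ⟨k, hk⟩ := hg.2 k'
    have hkne : k ≠ Fin.last M := by
      intro h; rw [h, hA] at hk; cases hk
    refine ⟨(k.castPred hkne), ?_⟩
    simpa [Function.comp, Fin.castSucc_castPred] using hk

theorem sigmaG_restrictA {n M m' : ℕ} (g : Fin (M+1) → Fin m' ⊕ Fin n)
    {c : Fin n} (hA : g (Fin.last M) = Sum.inr c) (j : Fin m' → Fin n) :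
    sigmaG g j = Fin.snoc (sigmaG (g ∘ Fin.castSucc) j) c := by
  funext k
  induction k using Fin.lastCases with
  | last => rw [Fin.snoc_last]; unfold sigmaG; rw [hA]; rfl
  | cast k => rw [Fin.snoc_castSucc]; rfl

theorem punct_restrictA {n M m' : ℕ} (g : Fin (M+1) → Fin m' ⊕ Fin n)
    {c : Fin n} (hA : g (Fin.last M) = Sum.inr c) (v : (Fin (M+1) → Fin n) → ZMod 2) :
    punct g v = punct (g ∘ Fin.castSucc) (subvec v c) := by
  funext j
  show v (sigmaG g j) = v (Fin.snoc (sigmaG (g ∘ Fin.castSucc) j) c)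
  rw [sigmaG_restrictA g hA j]

/- ### case B : last coordinate free -/

theorem goodG_lam_last {n M M' : ℕ} {g : Fin (M+1) → Fin (M'+1) ⊕ Fin n} (hg : GoodG g)
    {lam : Fin (M'+1)} (hB : g (Fin.last M) = Sum.inl lam) : lam = Fin.last M' := by
  refine le_antisymm (Fin.le_last lam) ?_
  obtain ⟨k, hk⟩ := hg.2 (Fin.last M')
  rcases eq_or_lt_of_le (Fin.le_last k) with h | h
  · rw [h, hB] at hk; rw [Sum.inl.inj hk]
  · exact le_of_lt ((hg.1 _ _ _ _ hk hB).mp h)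

theorem goodG_ne_last {n M M' : ℕ} {g : Fin (M+1) → Fin (M'+1) ⊕ Fin n} (hg : GoodG g)
    (hB : g (Fin.last M) = Sum.inl (Fin.last M')) {k : Fin M} {k' : Fin (M'+1)}
    (h : g k.castSucc = Sum.inl k') : k' ≠ Fin.last M' := by
  intro he
  subst he
  have := goodG_inl_inj hg h hB
  exact absurd (congrArg Fin.val this) (by simp [Fin.castSucc]; omega)

/-- Restriction of `g` in case B. `c₀` is a junk value. -/
def restrictB {n M M' : ℕ} (c₀ : Fin n) (g : Fin (M+1) → Fin (M'+1) ⊕ Fin n) :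
    Fin M → Fin M' ⊕ Fin n :=
  fun k => match g k.castSucc with
  | Sum.inl k' => if h : k' = Fin.last M' then Sum.inr c₀ else Sum.inl (k'.castPred h)
  | Sum.inr c => Sum.inr c

theorem restrictB_inl {n M M' : ℕ} (c₀ : Fin n) {g : Fin (M+1) → Fin (M'+1) ⊕ Fin n}
    (hg : GoodG g) (hB : g (Fin.last M) = Sum.inl (Fin.last M')) {k : Fin M} {k' : Fin (M'+1)}
    (h : g k.castSucc = Sum.inl k') :
    restrictB c₀ g k = Sum.inl (k'.castPred (goodG_ne_last hg hB h)) := by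
  unfold restrictB
  split
  · rename_i k'' hk''
    rw [h] at hk''
    obtain rfl := Sum.inl.inj hk''
    rw [dif_neg (goodG_ne_last hg hB h)]
  · rename_i c hc
    rw [h] at hc; cases hc

theorem restrictB_inr {n M M' : ℕ} (c₀ : Fin n) {g : Fin (M+1) → Fin (M'+1) ⊕ Fin n}
    {k : Fin M} {c : Fin n} (h : g k.castSucc = Sum.inr c) :
    restrictB c₀ g k = Sum.inr c := by
  unfold restrictB
  split
  · rename_i k'' hk''
    rw [h] at hk''; cases hk''
  · rename_i c' hc
    rw [h] at hc
    rw [Sum.inr.inj hc]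

theorem goodG_restrictB {n M M' : ℕ} (c₀ : Fin n) {g : Fin (M+1) → Fin (M'+1) ⊕ Fin n}
    (hg : GoodG g) (hB : g (Fin.last M) = Sum.inl (Fin.last M')) : GoodG (restrictB c₀ g) := by
  constructor
  · intro k₁ k₂ k₁' k₂' h1 h2
    -- need : g k₁.castSucc = inl k₁'.castSucc etc
    have e1 : g k₁.castSucc = Sum.inl (k₁'.castSucc) := by
      rcases hgk : g k₁.castSucc with k'' | c
      · rw [restrictB_inl c₀ hg hB hgk] at h1
        obtain rfl := Sum.inl.inj h1
        rw [Fin.castSucc_castPred]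
      · rw [restrictB_inr c₀ hgk] at h1; cases h1
    have e2 : g k₂.castSucc = Sum.inl (k₂'.castSucc) := by
      rcases hgk : g k₂.castSucc with k'' | c
      · rw [restrictB_inl c₀ hg hB hgk] at h2
        obtain rfl := Sum.inl.inj h2
        rw [Fin.castSucc_castPred]
      · rw [restrictB_inr c₀ hgk] at h2; cases h2
    have := hg.1 _ _ _ _ e1 e2
    simpa [Fin.castSucc_lt_castSucc_iff] using this
  · intro k'
    obtain ⟨k, hk⟩ := hg.2 k'.castSucc
    have hkne : k ≠ Fin.last M := by
      intro h; rw [h, hB] at hk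
      have h2 := congrArg Fin.val (Sum.inl.inj hk)
      have h3 := k'.isLt
      simp at h2
      omega
    refine ⟨k.castPred hkne, ?_⟩
    have hk' : g ((k.castPred hkne).castSucc) = Sum.inl k'.castSucc := by
      rwa [Fin.castSucc_castPred]
    rw [restrictB_inl c₀ hg hB hk']
    simp

theorem sigmaG_restrictB {n M M' : ℕ} (c₀ : Fin n) {g : Fin (M+1) → Fin (M'+1) ⊕ Fin n}
    (hg : GoodG g) (hB : g (Fin.last M) = Sum.inl (Fin.last M'))
    (i' : Fin M' → Fin n) (l : Fin n) :
    sigmaG g (Fin.snoc i' l) = Fin.snoc (sigmaG (restrictB c₀ g) i') l := by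
  funext k
  induction k using Fin.lastCases with
  | last =>
    rw [Fin.snoc_last]
    unfold sigmaG
    rw [hB]
    simp [Fin.snoc_last]
  | cast k =>
    rw [Fin.snoc_castSucc]
    unfold sigmaG
    rcases hgk : g k.castSucc with k' | c
    · rw [restrictB_inl c₀ hg hB hgk]
      simp only [Sum.elim_inl]
      have h := goodG_ne_last hg hB hgk
      have e : Fin.snoc (α := fun _ => Fin n) i' l ((k'.castPred h).castSucc)
          = i' (k'.castPred h) := Fin.snoc_castSucc ..
      rw [Fin.castSucc_castPred] at e
      exact e
    · rw [restrictB_inr c₀ hgk]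
      simp

theorem subvec_punct {n M M' : ℕ} (c₀ : Fin n) {g : Fin (M+1) → Fin (M'+1) ⊕ Fin n}
    (hg : GoodG g) (hB : g (Fin.last M) = Sum.inl (Fin.last M'))
    (v : (Fin (M+1) → Fin n) → ZMod 2) (l : Fin n) :
    subvec (punct g v) l = punct (restrictB c₀ g) (subvec v l) := by
  funext i'
  show v (sigmaG g (Fin.snoc i' l)) = v (Fin.snoc (sigmaG (restrictB c₀ g) i') l)
  rw [sigmaG_restrictB c₀ hg hB i' l]

/- ## more helpers -/

theorem sum_mem_D {n m r : ℕ} {ι : Type*} (s : Finset ι) (f : ι → (Fin m → Fin n) → ZMod 2)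
    (h : ∀ i ∈ s, f i ∈ BermanD n m r) : ∑ i ∈ s, f i ∈ BermanD n m r := by
  classical
  induction s using Finset.induction_on with
  | empty => simpa using zero_mem_D n m r
  | @insert a s' hx ih =>
    rw [Finset.sum_insert hx]
    exact add_mem_D n m r _ _ (h a (Finset.mem_insert_self a s'))
      (ih fun i hi => h i (Finset.mem_insert_of_mem hi))

/-- Glue prescribed subvectors into a vector on the larger cube. -/
def glue {n m : ℕ} (f : Fin n → (Fin m → Fin n) → ZMod 2) : (Fin (m+1) → Fin n) → ZMod 2 :=
  fun i => f (i (Fin.last m)) (Fin.init i)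

theorem subvec_glue {n m : ℕ} (f : Fin n → (Fin m → Fin n) → ZMod 2) (l : Fin n) :
    subvec (glue f) l = f l := by
  funext i'
  simp [glue, subvec, Fin.snoc_last, Fin.init_snoc]

theorem exists_inr_of_lt {n m m' : ℕ} {g : Fin m → Fin m' ⊕ Fin n} (hg : GoodG g)
    (hlt : m' < m) : ∃ k c, g k = Sum.inr c := by
  by_contra hno
  push_neg at hno
  have hf : ∀ k, ∃ k', g k = Sum.inl k' := by
    intro k
    rcases h : g k with k' | c
    · exact ⟨k', rfl⟩
    · exact absurd h (hno k c)
  choose f hfspec using hf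
  have hinj : Function.Injective f := fun a b hab =>
    goodG_inl_inj hg (hfspec a) (by rw [hfspec b, hab])
  have := Fintype.card_le_of_injective f hinj
  simp at this
  omega

/- ## surjectivity of puncturing on D(r,m) when m' + r < m -/

theorem punct_D_surj (n : ℕ) (hn : 2 ≤ n) :
    ∀ m, ∀ (m' r : ℕ) (g : Fin m → Fin m' ⊕ Fin n), GoodG g → m' + r < m →
    ∀ t : (Fin m' → Fin n) → ZMod 2, ∃ v ∈ BermanD n m r, punct g v = t := by
  intro m
  induction m with
  | zero => intro m' r g hg hlt t; omega
  | succ M IH =>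
    intro m' r g hg hlt t
    rcases Nat.eq_zero_or_pos r with rfl | hr0
    · -- r = 0 : the parity-check code surjects
      set v₀ : (Fin (M+1) → Fin n) → ZMod 2 := fun i => t (fun k' => i (posG g hg k'))
        with hv₀
      have hpv₀ : punct g v₀ = t := by
        funext j
        show t (fun k' => sigmaG g j (posG g hg k')) = t j
        congr 1
        funext k'
        exact sigmaG_posG g hg j k'
      obtain ⟨k₀, c₀, hk₀⟩ := exists_inr_of_lt hg (by omega)
      set c₀' : Fin n := if c₀ = ⟨0, by omega⟩ then ⟨1, by omega⟩ else ⟨0, by omega⟩ with hc₀'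
      have hne : c₀' ≠ c₀ := by
        rw [hc₀']
        split
        · rename_i h; rw [h]; intro hh; exact absurd (congrArg Fin.val hh) (by simp)
        · rename_i h; exact fun hh => h hh.symm
      set y : Fin (M+1) → Fin n := fun _ => c₀' with hy
      have hyn : ∀ j : Fin m' → Fin n, sigmaG g j ≠ y := by
        intro j h
        have h2 := congrFun h k₀
        unfold sigmaG at h2
        rw [hk₀] at h2
        simp [hy] at h2
        exact hne h2.symm
      set c : ZMod 2 := ∑ i, v₀ i with hc
      set v : (Fin (M+1) → Fin n) → ZMod 2 :=
        v₀ + (fun i => if i = y then c else 0) with hv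
      refine ⟨v, ?_, ?_⟩
      · rw [bermanD_zero]
        show (∑ i, v i) = 0
        rw [hv]
        simp only [Pi.add_apply]
        rw [Finset.sum_add_distrib]
        rw [Finset.sum_ite_eq' Finset.univ y (fun _ => c)]
        simp [← hc, CharTwo.add_self_eq_zero]
      · rw [hv]
        rw [punct_add, hpv₀]
        have : punct g (fun i => if i = y then c else 0) = 0 := by
          funext j
          show (if sigmaG g j = y then c else 0) = 0
          rw [if_neg (hyn j)]
        rw [this, add_zero]
    -- now r ≥ 1, and r ≤ M
    rcases hlast : g (Fin.last M) with lam | cfix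
    · -- case B : last coordinate free
      rcases m' with _ | M'
      · exact lam.elim0
      have hlam := goodG_lam_last hg hlast
      subst hlam
      set c₀ : Fin n := ⟨0, by omega⟩ with hc₀
      set g' := restrictB c₀ g with hg'def
      have hg' : GoodG g' := goodG_restrictB c₀ hg hlast
      have hx : ∀ l : Fin n, ∃ x, x ∈ BermanD n M (r-1) ∧ punct g' x = subvec t l := by
        intro l
        obtain ⟨x, hx1, hx2⟩ := IH M' (r-1) g' hg' (by omega) (subvec t l)
        exact ⟨x, hx1, hx2⟩
      choose x hx1 hx2 using hx
      set S : (Fin M → Fin n) → ZMod 2 := ∑ l : Fin n, x l with hS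
      have hSmem : S ∈ BermanD n M (r-1) :=
        sum_mem_D Finset.univ x (fun l _ => hx1 l)
      obtain ⟨d, hd1, hd2⟩ := IH M' r g' hg' (by omega) (punct g' S)
      set l₀ : Fin n := ⟨0, by omega⟩ with hl₀
      set xf : Fin n → (Fin M → Fin n) → ZMod 2 :=
        fun l => x l + (if l = l₀ then S + d else 0) with hxf
      set v := glue xf with hvdef
      have hsub : ∀ l, subvec v l = xf l := fun l => subvec_glue xf l
      refine ⟨v, ?_, ?_⟩
      · rw [bermanD_succ n M r (by omega) (by omega)]
        constructor
        · intro l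
          rw [hsub l, hxf]
          refine add_mem_D n M (r-1) _ _ (hx1 l) ?_
          split
          · exact add_mem_D n M (r-1) _ _ hSmem (D_anti n M (r-1) r (by omega) hd1)
          · exact zero_mem_D n M (r-1)
        · have : (fun i' => ∑ l : Fin n, subvec v l i') = d := by
            funext i'
            have : ∀ l, subvec v l i' = x l i' + (if l = l₀ then S i' + d i' else 0) := by
              intro l
              rw [hsub l, hxf]
              simp only [Pi.add_apply]
              split <;> simp
            simp only [this]
            rw [Finset.sum_add_distrib]
            rw [Finset.sum_ite_eq' Finset.univ l₀ (fun _ => S i' + d i')]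
            have hSi : S i' = ∑ l : Fin n, x l i' := by rw [hS]; simp
            simp only [Finset.mem_univ, if_true]
            rw [← hSi]
            rw [← add_assoc, CharTwo.add_self_eq_zero, zero_add]
          rw [this]
          exact hd1
      · apply eq_of_subvec
        intro l
        rw [subvec_punct c₀ hg hlast v l, hsub l, hxf]
        simp only
        rw [punct_add]
        split
        · rw [punct_add, hx2, hd2]
          have hzero : punct g' S + punct g' S = 0 := by
            funext j
            exact CharTwo.add_self_eq_zero _
          rw [hzero, add_zero]
        · rw [punct_zero, add_zero, hx2]
    · -- case A : last coordinate fixed to cfix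
      set g' := g ∘ Fin.castSucc with hg'def
      have hg' : GoodG g' := goodG_restrictA hg hlast
      obtain ⟨x, hx1, hx2⟩ := IH m' (r-1) g' hg' (by omega) t
      set l₁ : Fin n := if cfix = ⟨0, by omega⟩ then ⟨1, by omega⟩ else ⟨0, by omega⟩ with hl₁
      have hne : l₁ ≠ cfix := by
        rw [hl₁]
        split
        · rename_i h; rw [h]; intro hh; exact absurd (congrArg Fin.val hh) (by simp)
        · rename_i h; exact fun hh => h hh.symm
      set xf : Fin n → (Fin M → Fin n) → ZMod 2 :=
        fun l => (if l = cfix then x else 0) + (if l = l₁ then x else 0) with hxf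
      set v := glue xf with hvdef
      have hsub : ∀ l, subvec v l = xf l := fun l => subvec_glue xf l
      refine ⟨v, ?_, ?_⟩
      · rw [bermanD_succ n M r (by omega) (by omega)]
        constructor
        · intro l
          rw [hsub l, hxf]
          refine add_mem_D n M (r-1) _ _ ?_ ?_ <;>
            · split
              · exact hx1
              · exact zero_mem_D n M (r-1)
        · have : (fun i' => ∑ l : Fin n, subvec v l i') = 0 := by
            funext i'
            have : ∀ l, subvec v l i' =
                (if l = cfix then x i' else 0) + (if l = l₁ then x i' else 0) := by
              intro l
              rw [hsub l, hxf]
              simp only [Pi.add_apply]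
              split <;> split <;> simp
            simp only [this]
            rw [Finset.sum_add_distrib]
            rw [Finset.sum_ite_eq' Finset.univ cfix (fun _ => x i'),
              Finset.sum_ite_eq' Finset.univ l₁ (fun _ => x i')]
            simp [CharTwo.add_self_eq_zero]
          rw [this]
          exact zero_mem_D n M r
      · rw [punct_restrictA g hlast v, hsub cfix, hxf]
        simp only [if_pos rfl, if_neg (Ne.symm hne)]
        rw [add_zero]
        exact hx2

/- ## puncturing C -/

theorem add_add_self {α : Type*} (a b : α → ZMod 2) : a + (b + a) = b := by
  funext x
  simp only [Pi.add_apply]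
  have h : a x + a x = 0 := CharTwo.add_self_eq_zero _
  linear_combination h

theorem mem_image_lift {α β : Type*} {f : α → β} {S : Set α} {T : Set β}
    (h : f '' S = T) {t : β} (ht : t ∈ T) : ∃ s ∈ S, f s = t := by
  rw [← h] at ht; exact ht

theorem bermanC_zero' (n m : ℕ) :
    BermanC n m 0 = {v | ∃ c : ZMod 2, ∀ i, v i = c} := by
  cases m with
  | zero =>
    ext v
    simp only [BermanC, Set.mem_univ, true_iff, Set.mem_setOf_eq]
    refine ⟨v (fun k => k.elim0), fun i => ?_⟩
    congr 1
    funext k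
    exact k.elim0
  | succ M => exact bermanC_zero n M

theorem image_univ_punct {n m m' : ℕ} (g : Fin m → Fin m' ⊕ Fin n) (hg : GoodG g) :
    punct g '' Set.univ = Set.univ := by
  rw [Set.image_univ]
  exact Set.range_eq_univ.mpr (punct_surjective g hg)

theorem punct_C (n : ℕ) (hn : 2 ≤ n) :
    ∀ m, ∀ (m' r : ℕ) (g : Fin m → Fin m' ⊕ Fin n), GoodG g →
    punct g '' BermanC n m r = BermanC n m' r := by
  intro m
  induction m with
  | zero =>
    intro m' r g hg
    have hm' : m' = 0 := by have := goodG_le hg; omega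
    subst hm'
    show punct g '' Set.univ = _
    rw [image_univ_punct g hg]
    rfl
  | succ M IH =>
    intro m' r g hg
    rcases Nat.eq_zero_or_pos r with rfl | hr0
    · -- r = 0 : constants to constants
      rw [bermanC_zero, bermanC_zero']
      ext t
      constructor
      · rintro ⟨v, ⟨c, hc⟩, rfl⟩
        exact ⟨c, fun j => hc _⟩
      · rintro ⟨c, hc⟩
        refine ⟨fun _ => c, ⟨c, fun _ => rfl⟩, ?_⟩
        funext j
        exact (hc j).symm
    rcases le_or_gt (M+1) r with h1 | h1
    · rw [bermanC_top n M r h1, bermanC_univ n m' r (by have := goodG_le hg; omega)]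
      exact image_univ_punct g hg
    -- recursive branch : 1 ≤ r ≤ M
    rcases hlast : g (Fin.last M) with lam | cfix
    · -- case B
      rcases m' with _ | M'
      · exact lam.elim0
      have hlam := goodG_lam_last hg hlast
      subst hlam
      set c₀ : Fin n := ⟨0, by omega⟩ with hc₀
      set g' := restrictB c₀ g with hg'def
      have hg' : GoodG g' := goodG_restrictB c₀ hg hlast
      have IHr := IH M' r g' hg'
      have IHr1 := IH M' (r-1) g' hg'
      rcases le_or_gt (M'+1) r with h2 | h2
      · -- target is everything
        rw [bermanC_univ n (M'+1) r h2]
        apply Set.eq_univ_of_forall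
        intro t
        set ltop : Fin n := ⟨n-1, by omega⟩ with hltop
        have hCu : BermanC n M' r = Set.univ := bermanC_univ n M' r (by omega)
        have hCu1 : BermanC n M' (r-1) = Set.univ := bermanC_univ n M' (r-1) (by omega)
        rw [hCu] at IHr
        rw [hCu1] at IHr1
        obtain ⟨u, hu, hup⟩ := mem_image_lift IHr (Set.mem_univ (subvec t ltop))
        have hwl : ∀ l : Fin n, ∃ wl, wl ∈ BermanC n M (r-1) ∧
            punct g' wl = subvec t l + punct g' u :=
          fun l => mem_image_lift IHr1 (Set.mem_univ _)
        choose w0 hw01 hw02 using hwl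
        set w : Fin n → (Fin M → Fin n) → ZMod 2 :=
          fun l => if (l : ℕ) = n-1 then 0 else w0 l with hw
        set v := glue (fun l => u + w l) with hv
        have hsub : ∀ l, subvec v l = u + w l := fun l => subvec_glue _ l
        refine ⟨v, ?_, ?_⟩
        · rw [bermanC_succ n M r (by omega) (by omega)]
          refine ⟨u, w, hu, fun l hl => ?_, fun l hl => ?_, hsub⟩
          · rw [hw]; simp only; rw [if_neg (by omega)]; exact hw01 l
          · rw [hw]; simp only; rw [if_pos hl]
        · apply eq_of_subvec
          intro l
          rw [subvec_punct c₀ hg hlast v l, hsub l, punct_add]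
          rcases eq_or_lt_of_le (show (l:ℕ) ≤ n-1 by have := l.isLt; omega) with he | hlt
          · have hle : l = ltop := Fin.ext (by rw [hltop]; exact he)
            subst hle
            have hwt : w ltop = 0 := by rw [hw]; simp [hltop]
            rw [hwt, punct_zero, add_zero, hup]
          · have hwt : w l = w0 l := by
              rw [hw]; simp only; rw [if_neg (by omega)]
            rw [hwt, hw02 l]
            rw [show punct g' u + (subvec t l + punct g' u) = subvec t l from
              add_add_self _ _]
      · -- both recursive : r ≤ M'
        ext t
        rw [bermanC_succ n M' r (by omega) (by omega)]
        constructor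
        · rintro ⟨v, hv, rfl⟩
          rw [bermanC_succ n M r (by omega) (by omega)] at hv
          obtain ⟨u, w, hu, hwmem, hz, hs⟩ := hv
          refine ⟨punct g' u, fun l => punct g' (w l), ?_, ?_, ?_, ?_⟩
          · rw [← IHr]; exact Set.mem_image_of_mem _ hu
          · intro l hl
            rw [← IHr1]; exact Set.mem_image_of_mem _ (hwmem l hl)
          · intro l hl
            show punct g' (w l) = 0
            rw [hz l hl, punct_zero]
          · intro l
            rw [subvec_punct c₀ hg hlast _ l, hs l, punct_add]
        · rintro ⟨u', w', hu', hw', hz', hs'⟩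
          obtain ⟨u, hu, hup⟩ := mem_image_lift IHr hu'
          have hwl : ∀ l : Fin n, ∃ wl, wl ∈ BermanC n M (r-1) ∧
              ((l : ℕ) < n-1 → punct g' wl = w' l) ∧ ((l : ℕ) = n-1 → wl = 0) := by
            intro l
            rcases lt_or_ge (l : ℕ) (n-1) with hl | hl
            · obtain ⟨wl, h1, h2⟩ := mem_image_lift IHr1 (hw' l hl)
              exact ⟨wl, h1, fun _ => h2, fun he => by omega⟩
            · exact ⟨0, zero_mem_C n M (r-1), fun hc => by omega, fun _ => rfl⟩
          choose w hw1 hw2 hw3 using hwl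
          set v := glue (fun l => u + w l) with hv
          have hsub : ∀ l, subvec v l = u + w l := fun l => subvec_glue _ l
          refine ⟨v, ?_, ?_⟩
          · rw [bermanC_succ n M r (by omega) (by omega)]
            exact ⟨u, w, hu, fun l hl => hw1 l, hw3, hsub⟩
          · apply eq_of_subvec
            intro l
            rw [subvec_punct c₀ hg hlast v l, hsub l, punct_add, hup]
            rcases lt_or_ge (l : ℕ) (n-1) with hl | hl
            · rw [hw2 l hl, hs' l]
            · have he : (l : ℕ) = n - 1 := by have := l.isLt; omega
              rw [hw3 l he, punct_zero, add_zero, hs' l, hz' l he, add_zero]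
    · -- case A : last coordinate fixed
      set g' := g ∘ Fin.castSucc with hg'def
      have hg' : GoodG g' := goodG_restrictA hg hlast
      have IHr := IH m' r g' hg'
      have IHr1 := IH m' (r-1) g' hg'
      ext t
      constructor
      · rintro ⟨v, hv, rfl⟩
        rw [bermanC_succ n M r (by omega) (by omega)] at hv
        obtain ⟨u, w, hu, hwmem, hz, hs⟩ := hv
        rw [punct_restrictA g hlast v, hs cfix, punct_add]
        apply add_mem_C
        · rw [← IHr]; exact Set.mem_image_of_mem _ hu
        · rcases lt_or_ge (cfix : ℕ) (n-1) with hl | hl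
          · apply C_mono n m' (r-1) r (by omega)
            rw [← IHr1]; exact Set.mem_image_of_mem _ (hwmem cfix hl)
          · have he : (cfix : ℕ) = n - 1 := by have := cfix.isLt; omega
            rw [hz cfix he, punct_zero]
            exact zero_mem_C n m' r
      · intro ht
        obtain ⟨u, hu, hup⟩ := mem_image_lift IHr ht
        set v := glue (fun _ => u) with hv
        refine ⟨v, ?_, ?_⟩
        · rw [bermanC_succ n M r (by omega) (by omega)]
          exact ⟨u, fun _ => 0, hu, fun l _ => zero_mem_C n M (r-1), fun l _ => rfl,
            fun l => by rw [subvec_glue]; simp⟩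
        · rw [punct_restrictA g hlast v, subvec_glue, hup]

/- ## puncturing D -/

theorem punct_sum {n m m' : ℕ} (g : Fin m → Fin m' ⊕ Fin n) {ι : Type*} (s : Finset ι)
    (x : ι → (Fin m → Fin n) → ZMod 2) :
    punct g (∑ l ∈ s, x l) = ∑ l ∈ s, punct g (x l) := by
  funext j
  show (∑ l ∈ s, x l) (sigmaG g j) = _
  rw [Finset.sum_apply]
  rw [Finset.sum_apply]
  rfl

theorem mem_D_zero_of_sum {n m : ℕ} {T : (Fin m → Fin n) → ZMod 2}
    (h : ∑ i, T i = 0) : T ∈ BermanD n m 0 := by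
  cases m with
  | zero =>
    have : T = 0 := by
      funext i
      have hu : i = (fun k => k.elim0) := by funext k; exact k.elim0
      rw [hu]
      calc T (fun k => k.elim0) = ∑ i, T i := (Fintype.sum_unique T).symm
        _ = 0 := h
    rw [this]; rfl
  | succ M => rw [bermanD_zero]; exact h

theorem sigmaG_injective {n m m' : ℕ} {g : Fin m → Fin m' ⊕ Fin n} (hg : GoodG g) :
    Function.Injective (fun j : Fin m' → Fin n => sigmaG g j) := by
  intro j₁ j₂ h
  funext k'
  have := congrFun h (posG g hg k')
  simpa [sigmaG_posG g hg] using this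

theorem punct_D (n : ℕ) (hn : 2 ≤ n) :
    ∀ m, ∀ (m' r : ℕ) (g : Fin m → Fin m' ⊕ Fin n), GoodG g → m ≤ m' + r →
    punct g '' BermanD n m r = BermanD n m' (r - (m - m')) := by
  intro m
  induction m with
  | zero =>
    intro m' r g hg _
    have hm' : m' = 0 := by have := goodG_le hg; omega
    subst hm'
    show punct g '' {0} = _
    rw [Set.image_singleton, punct_zero]
    rfl
  | succ M IH =>
    intro m' r g hg hle
    have hm'le : m' ≤ M + 1 := goodG_le hg
    rcases Nat.eq_zero_or_pos r with rfl | hr0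
    · -- r = 0 hence m' = M+1 and sigmaG g is a bijection
      have hm' : m' = M + 1 := by omega
      subst hm'
      rw [Nat.sub_self, Nat.sub_zero]
      have hbij : Function.Bijective (fun j : Fin (M+1) → Fin n => sigmaG g j) :=
        (Finite.injective_iff_bijective).mp (sigmaG_injective hg)
      set e := Equiv.ofBijective _ hbij with he
      ext t
      simp only [bermanD_zero, Set.mem_setOf_eq]
      constructor
      · rintro ⟨v, hv, rfl⟩
        simp only [bermanD_zero, Set.mem_setOf_eq] at hv
        show ∑ j, v (sigmaG g j) = 0
        rw [Fintype.sum_bijective _ hbij _ _ (fun j => rfl)]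
        exact hv
      · intro ht
        refine ⟨fun i => t (e.symm i), ?_, ?_⟩
        · simp only [bermanD_zero, Set.mem_setOf_eq]
          rw [Equiv.sum_comp e.symm t]
          exact ht
        · funext j
          show t (e.symm (sigmaG g j)) = t j
          congr 1
          exact e.symm_apply_apply j
    rcases le_or_gt (M+1) r with h1 | h1
    · -- r ≥ m : both sides {0}
      rw [bermanD_top n M r h1]
      rw [Set.image_singleton, punct_zero]
      cases m' with
      | zero => rfl
      | succ M'' => rw [bermanD_top n M'' _ (by omega)]
    -- recursive branch : 1 ≤ r ≤ M
    rcases hlast : g (Fin.last M) with lam | cfix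
    · -- case B : last coordinate free
      rcases m' with _ | M'
      · exact lam.elim0
      have hlam := goodG_lam_last hg hlast
      subst hlam
      set c₀ : Fin n := ⟨0, by omega⟩ with hc₀
      set g' := restrictB c₀ g with hg'def
      have hg' : GoodG g' := goodG_restrictB c₀ hg hlast
      have hM'M : M' ≤ M := goodG_le hg'
      set R : ℕ := r - (M + 1 - (M'+1)) with hR
      have hRr : R = r - (M - M') := by omega
      set l₀ : Fin n := ⟨0, by omega⟩ with hl₀
      rcases Nat.eq_zero_or_pos R with hR0 | hR0
      · -- boundary case : r = M - M', target is the parity-check code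
        have hrs : r = M - M' := by omega
        have hMM' : M' < M := by omega
        have IHr := IH M' r g' hg' (by omega)
        rw [show r - (M - M') = 0 by omega] at IHr
        rw [hR]
        rw [show r - (M + 1 - (M'+1)) = 0 by omega]
        ext t
        simp only [bermanD_zero, Set.mem_setOf_eq]
        constructor
        · rintro ⟨v, hv, rfl⟩
          rw [bermanD_succ n M r (by omega) (by omega)] at hv
          obtain ⟨hv1, hv2⟩ := hv
          rw [sum_snoc (punct g v)]
          have hswap : ∀ l : Fin n, ∀ i' : Fin M' → Fin n,
              punct g v (Fin.snoc i' l) = punct g' (subvec v l) i' := by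
            intro l i'
            exact congrFun (subvec_punct c₀ hg hlast v l) i'
          have : ∀ l : Fin n, ∑ i' : Fin M' → Fin n, punct g v (Fin.snoc i' l)
              = ∑ i', punct g' (subvec v l) i' := by
            intro l; exact Finset.sum_congr rfl (fun i' _ => hswap l i')
          rw [Finset.sum_congr rfl (fun l _ => this l)]
          rw [Finset.sum_comm]
          have hX : (∑ i' : Fin M' → Fin n, ∑ l : Fin n, punct g' (subvec v l) i')
              = ∑ i', punct g' (fun i'' => ∑ l : Fin n, subvec v l i'') i' := by
            apply Finset.sum_congr rfl
            intro i' _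
            show _ = (fun i'' => ∑ l : Fin n, subvec v l i'') (sigmaG g' i')
            simp only
            rfl
          rw [hX]
          have hmem : punct g' (fun i'' => ∑ l : Fin n, subvec v l i'')
              ∈ BermanD n M' 0 := by
            rw [← IHr]
            exact Set.mem_image_of_mem _ hv2
          exact sum_eq_zero_of_mem_D n M' 0 _ hmem
        · intro ht
          -- reverse : lift t through the puncturing
          have hx : ∀ l : Fin n, ∃ x, x ∈ BermanD n M (r-1) ∧ punct g' x = subvec t l :=
            fun l => punct_D_surj n hn M M' (r-1) g' hg' (by omega) (subvec t l)
          choose x hx1 hx2 using hx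
          set S : (Fin M → Fin n) → ZMod 2 := ∑ l : Fin n, x l with hS
          have hSmem : S ∈ BermanD n M (r-1) :=
            sum_mem_D Finset.univ x (fun l _ => hx1 l)
          have hTsum : punct g' S = ∑ l : Fin n, subvec t l := by
            rw [hS, punct_sum]
            exact Finset.sum_congr rfl (fun l _ => hx2 l)
          have hTmem : (∑ l : Fin n, subvec t l) ∈ BermanD n M' 0 := by
            apply mem_D_zero_of_sum
            have hstep : ∑ i' : Fin M' → Fin n, (∑ l : Fin n, subvec t l) i'
                = ∑ l : Fin n, ∑ i' : Fin M' → Fin n, t (Fin.snoc i' l) := by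
              rw [Finset.sum_congr rfl
                (fun i' (_ : i' ∈ Finset.univ) => Finset.sum_apply i' Finset.univ _)]
              exact Finset.sum_comm
            rw [hstep, ← sum_snoc t]
            exact ht
          obtain ⟨d, hd1, hd2⟩ := mem_image_lift IHr hTmem
          set xf : Fin n → (Fin M → Fin n) → ZMod 2 :=
            fun l => x l + (if l = l₀ then S + d else 0) with hxf
          set v := glue xf with hvdef
          have hsub : ∀ l, subvec v l = xf l := fun l => subvec_glue xf l
          refine ⟨v, ?_, ?_⟩
          · rw [bermanD_succ n M r (by omega) (by omega)]
            constructor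
            · intro l
              rw [hsub l, hxf]
              refine add_mem_D n M (r-1) _ _ (hx1 l) ?_
              split
              · exact add_mem_D n M (r-1) _ _ hSmem (D_anti n M (r-1) r (by omega) hd1)
              · exact zero_mem_D n M (r-1)
            · have heq : (fun i' => ∑ l : Fin n, subvec v l i') = d := by
                funext i'
                have hterm : ∀ l, subvec v l i' = x l i' + (if l = l₀ then S i' + d i' else 0) := by
                  intro l
                  rw [hsub l, hxf]
                  simp only [Pi.add_apply]
                  split <;> simp
                simp only [hterm]
                rw [Finset.sum_add_distrib]
                rw [Finset.sum_ite_eq' Finset.univ l₀ (fun _ => S i' + d i')]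
                have hSi : S i' = ∑ l : Fin n, x l i' := by rw [hS]; simp
                simp only [Finset.mem_univ, if_true]
                rw [← hSi]
                rw [← add_assoc, CharTwo.add_self_eq_zero, zero_add]
              rw [heq]
              exact hd1
          · apply eq_of_subvec
            intro l
            rw [subvec_punct c₀ hg hlast v l, hsub l, hxf]
            simp only
            rw [punct_add]
            split
            · rw [punct_add, hx2, hd2, hTsum]
              have hzero : (∑ l : Fin n, subvec t l) + (∑ l : Fin n, subvec t l) = 0 := by
                funext j
                exact CharTwo.add_self_eq_zero _
              rw [hzero, add_zero]
            · rw [punct_zero, add_zero, hx2]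
      · -- R ≥ 1 : both sides recursive
        have IHr := IH M' r g' hg' (by omega)
        have IHr1 := IH M' (r-1) g' hg' (by omega)
        rw [show r - (M - M') = R by omega] at IHr
        rw [show (r-1) - (M - M') = R - 1 by omega] at IHr1
        rw [hR]
        rw [show r - (M + 1 - (M'+1)) = R by omega]
        ext t
        rw [bermanD_succ n M' R (by omega) (by omega)]
        constructor
        · rintro ⟨v, hv, rfl⟩
          rw [bermanD_succ n M r (by omega) (by omega)] at hv
          obtain ⟨hv1, hv2⟩ := hv
          constructor
          · intro l
            rw [subvec_punct c₀ hg hlast v l]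
            rw [← IHr1]
            exact Set.mem_image_of_mem _ (hv1 l)
          · have heq : (fun i' => ∑ l : Fin n, subvec (punct g v) l i')
                = punct g' (fun i'' => ∑ l : Fin n, subvec v l i'') := by
              funext i'
              rw [Finset.sum_congr rfl
                (fun l _ => congrFun (subvec_punct c₀ hg hlast v l) i')]
              rfl
            rw [heq, ← IHr]
            exact Set.mem_image_of_mem _ hv2
        · rintro ⟨ht1, ht2⟩
          have hx : ∀ l : Fin n, ∃ x, x ∈ BermanD n M (r-1) ∧ punct g' x = subvec t l :=
            fun l => mem_image_lift IHr1 (ht1 l)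
          choose x hx1 hx2 using hx
          set S : (Fin M → Fin n) → ZMod 2 := ∑ l : Fin n, x l with hS
          have hSmem : S ∈ BermanD n M (r-1) :=
            sum_mem_D Finset.univ x (fun l _ => hx1 l)
          obtain ⟨d, hd1, hd2⟩ := mem_image_lift IHr ht2
          have hTsum : punct g' S = punct g' d := by
            rw [hS, punct_sum, hd2]
            funext i'
            rw [Finset.sum_apply]
            exact Finset.sum_congr rfl (fun l _ => congrFun (hx2 l) i')
          set xf : Fin n → (Fin M → Fin n) → ZMod 2 :=
            fun l => x l + (if l = l₀ then S + d else 0) with hxf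
          set v := glue xf with hvdef
          have hsub : ∀ l, subvec v l = xf l := fun l => subvec_glue xf l
          refine ⟨v, ?_, ?_⟩
          · rw [bermanD_succ n M r (by omega) (by omega)]
            constructor
            · intro l
              rw [hsub l, hxf]
              refine add_mem_D n M (r-1) _ _ (hx1 l) ?_
              split
              · exact add_mem_D n M (r-1) _ _ hSmem (D_anti n M (r-1) r (by omega) hd1)
              · exact zero_mem_D n M (r-1)
            · have heq : (fun i' => ∑ l : Fin n, subvec v l i') = d := by
                funext i'
                have hterm : ∀ l, subvec v l i' = x l i' + (if l = l₀ then S i' + d i' else 0) := by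
                  intro l
                  rw [hsub l, hxf]
                  simp only [Pi.add_apply]
                  split <;> simp
                simp only [hterm]
                rw [Finset.sum_add_distrib]
                rw [Finset.sum_ite_eq' Finset.univ l₀ (fun _ => S i' + d i')]
                have hSi : S i' = ∑ l : Fin n, x l i' := by rw [hS]; simp
                simp only [Finset.mem_univ, if_true]
                rw [← hSi]
                rw [← add_assoc, CharTwo.add_self_eq_zero, zero_add]
              rw [heq]
              exact hd1
          · apply eq_of_subvec
            intro l
            rw [subvec_punct c₀ hg hlast v l, hsub l, hxf]
            simp only
            rw [punct_add]
            split
            · rw [punct_add, hx2, hTsum]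
              have hzero : punct g' d + punct g' d = 0 := by
                funext j
                exact CharTwo.add_self_eq_zero _
              rw [hzero, add_zero]
            · rw [punct_zero, add_zero, hx2]
    · -- case A : last coordinate fixed
      set g' := g ∘ Fin.castSucc with hg'def
      have hg' : GoodG g' := goodG_restrictA hg hlast
      have hm'M : m' ≤ M := goodG_le hg'
      have IHr1 := IH m' (r-1) g' hg' (by omega)
      rw [show (r-1) - (M - m') = r - (M + 1 - m') by omega] at IHr1
      ext t
      constructor
      · rintro ⟨v, hv, rfl⟩
        rw [bermanD_succ n M r (by omega) (by omega)] at hv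
        rw [punct_restrictA g hlast v]
        rw [← IHr1]
        exact Set.mem_image_of_mem _ (hv.1 cfix)
      · intro ht
        obtain ⟨u, hu, hup⟩ := mem_image_lift IHr1 ht
        set l₁ : Fin n := if cfix = ⟨0, by omega⟩ then ⟨1, by omega⟩ else ⟨0, by omega⟩ with hl₁
        have hne : l₁ ≠ cfix := by
          rw [hl₁]
          split
          · rename_i h; rw [h]; intro hh; exact absurd (congrArg Fin.val hh) (by simp)
          · rename_i h; exact fun hh => h hh.symm
        set xf : Fin n → (Fin M → Fin n) → ZMod 2 :=
          fun l => (if l = cfix then u else 0) + (if l = l₁ then u else 0) with hxf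
        set v := glue xf with hvdef
        have hsub : ∀ l, subvec v l = xf l := fun l => subvec_glue xf l
        refine ⟨v, ?_, ?_⟩
        · rw [bermanD_succ n M r (by omega) (by omega)]
          constructor
          · intro l
            rw [hsub l, hxf]
            refine add_mem_D n M (r-1) _ _ ?_ ?_ <;>
              · split
                · exact hu
                · exact zero_mem_D n M (r-1)
          · have heq : (fun i' => ∑ l : Fin n, subvec v l i') = 0 := by
              funext i'
              have hterm : ∀ l, subvec v l i' =
                  (if l = cfix then u i' else 0) + (if l = l₁ then u i' else 0) := by
                intro l
                rw [hsub l, hxf]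
                simp only [Pi.add_apply]
                split <;> split <;> simp
              simp only [hterm]
              rw [Finset.sum_add_distrib]
              rw [Finset.sum_ite_eq' Finset.univ cfix (fun _ => u i'),
                Finset.sum_ite_eq' Finset.univ l₁ (fun _ => u i')]
              simp [CharTwo.add_self_eq_zero]
            rw [heq]
            exact zero_mem_D n M r
        · rw [punct_restrictA g hlast v, hsub cfix, hxf]
          simp only [if_pos rfl, if_neg (Ne.symm hne)]
          rw [add_zero]
          exact hup

/-- puncturing to a direct-product subset determined by fixing the
coordinates in `K` to the values `b` sends `C_n(r,m)` to `C_n(r,m−|K|)` (for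
`r ≤ m−|K|`) and `D_n(r,m)` to `D_n(r−|K|,m−|K|)` (for `r ≥ |K|`); the punctured
coordinates are identified with `{0,…,n−1}^{m−|K|}` via the increasing enumeration of
the positions outside `K`. -/
theorem berman_puncture_general (n m r : ℕ) (hn : 2 ≤ n) (hm : 1 ≤ m) (hr : r ≤ m)
    (K : Finset (Fin m)) (hK : K.card ≤ m - 1) (b : {k // k ∈ K} → Fin n)
    (hcard : Kᶜ.card = m - K.card) :
    (r ≤ m - K.card →
      (fun v : (Fin m → Fin n) → ZMod 2 =>
          fun j : Fin (m - K.card) → Fin n =>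
            v (fun k : Fin m =>
              if hk : k ∈ K then b ⟨k, hk⟩
              else j ((Kᶜ.orderIsoOfFin hcard).symm ⟨k, Finset.mem_compl.mpr hk⟩))) ''
        BermanC n m r = BermanC n (m - K.card) r) ∧
    (K.card ≤ r →
      (fun v : (Fin m → Fin n) → ZMod 2 =>
          fun j : Fin (m - K.card) → Fin n =>
            v (fun k : Fin m =>
              if hk : k ∈ K then b ⟨k, hk⟩
              else j ((Kᶜ.orderIsoOfFin hcard).symm ⟨k, Finset.mem_compl.mpr hk⟩))) ''
        BermanD n m r = BermanD n (m - K.card) (r - K.card)) := by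
  
  have hKm : K.card ≤ m := by omega
  set e := Kᶜ.orderIsoOfFin hcard with he
  set g : Fin m → Fin (m - K.card) ⊕ Fin n := fun k =>
    if hk : k ∈ K then Sum.inr (b ⟨k, hk⟩)
    else Sum.inl (e.symm ⟨k, Finset.mem_compl.mpr hk⟩) with hgdef
  have hgk_pos : ∀ k (hk : k ∈ K), g k = Sum.inr (b ⟨k, hk⟩) := by
    intro k hk; rw [hgdef]; simp only; rw [dif_pos hk]
  have hgk_neg : ∀ k (hk : k ∉ K),
      g k = Sum.inl (e.symm ⟨k, Finset.mem_compl.mpr hk⟩) := by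
    intro k hk; rw [hgdef]; simp only; rw [dif_neg hk]
  have hGood : GoodG g := by
    constructor
    · intro k₁ k₂ k₁' k₂' h1 h2
      by_cases hk₁ : k₁ ∈ K
      · rw [hgk_pos k₁ hk₁] at h1; exact absurd h1 (by simp)
      by_cases hk₂ : k₂ ∈ K
      · rw [hgk_pos k₂ hk₂] at h2; exact absurd h2 (by simp)
      rw [hgk_neg k₁ hk₁] at h1
      rw [hgk_neg k₂ hk₂] at h2
      obtain rfl := Sum.inl.inj h1
      obtain rfl := Sum.inl.inj h2
      constructor
      · intro h
        exact (e.symm.lt_iff_lt).mpr (Subtype.mk_lt_mk.mpr h)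
      · intro h
        exact Subtype.mk_lt_mk.mp ((e.symm.lt_iff_lt).mp h)
    · intro k'
      have hnot : (e k' : Fin m) ∉ K := Finset.mem_compl.mp (e k').2
      refine ⟨(e k' : Fin m), ?_⟩
      rw [hgk_neg _ hnot]
      congr 1
      have hsub : (⟨(e k' : Fin m), Finset.mem_compl.mpr hnot⟩ : {x // x ∈ Kᶜ}) = e k' :=
        Subtype.ext rfl
      rw [hsub, OrderIso.symm_apply_apply]
  have hmap : (fun v : (Fin m → Fin n) → ZMod 2 =>
      fun j : Fin (m - K.card) → Fin n =>
        v (fun k : Fin m =>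
          if hk : k ∈ K then b ⟨k, hk⟩
          else j (e.symm ⟨k, Finset.mem_compl.mpr hk⟩)))
      = punct g := by
    funext v j
    show v _ = v (sigmaG g j)
    congr 1
    funext k
    by_cases hk : k ∈ K
    · rw [dif_pos hk]
      show _ = Sum.elim j id (g k)
      rw [hgk_pos k hk]
      rfl
    · rw [dif_neg hk]
      show _ = Sum.elim j id (g k)
      rw [hgk_neg k hk]
      rfl
  constructor
  · intro _
    rw [hmap]
    exact punct_C n hn m (m - K.card) r g hGood
  · intro hKr
    rw [hmap]
    have hconc := punct_D n hn m (m - K.card) r g hGood (by omega)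
    rwa [show r - (m - (m - K.card)) = r - K.card from by omega] at hconc
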